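/- Let (X,d) be a compact metric space and f : X → X continuous. Then (X,f) has the second weak shadowing property: for every ε > 0 there exists δ > 0 such that for every δ-pseudo-orbit (x_i)_{i≥0} there exists z ∈ X with Orb(z) = {f^k(z) : k ≥ 0} ⊆ B_ε({x_i : i ≥ 0}). -/

import Mathlib

open Metric EMetric Filter Topology TopologicalSpace Set

theorem second_weak_shadowing_metric {X : Type*} [MetricSpace X] [CompactSpace X]
    (f : X → X) (hf : Continuous f) (ε : ℝ) (hε : 0 < ε) :
    ∃ δ > (0 : ℝ), ∀ x : ℕ → X, (∀ i, dist (f (x i)) (x (i + 1)) < δ) →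
      ∃ z : X, ∀ k : ℕ, ∃ i : ℕ, dist (x i) (f^[k] z) < ε := by
  by_contra hcon
  push_neg at hcon
  choose x hx hxz using fun n : ℕ => hcon (1 / (n + 1)) (by positivity)
  set A : ℕ → Set X := fun n => Set.range (x n) with hA
  have hAne : ∀ n, (A n).Nonempty := fun n => Set.range_nonempty _
  have hKc : ∀ n, IsCompact (closure (A n)) := fun n => isClosed_closure.isCompact
  set K : ℕ → NonemptyCompacts X := fun n =>
    ⟨⟨closure (A n), hKc n⟩, (hAne n).closure⟩ with hK
  obtain ⟨L, -, φ, hφ, hL⟩ :=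
    isCompact_univ.tendsto_subseq (fun n : ℕ => Set.mem_univ (K n))
  have hdist : Tendsto (fun j => dist (K (φ j)) L) atTop (𝓝 0) :=
    tendsto_iff_dist_tendsto_zero.mp hL
  -- finiteness of Hausdorff edists
  have hfin : ∀ n, hausdorffEdist (K n : Set X) (L : Set X) ≠ ⊤ := fun n =>
    hausdorffEdist_ne_top_of_nonempty_of_bounded (K n).nonempty L.nonempty
      (K n).isCompact.isBounded L.isCompact.isBounded
  have hfin' : ∀ n, hausdorffEdist (L : Set X) (K n : Set X) ≠ ⊤ := fun n => by
    show hausdorffEDist _ _ ≠ ⊤; rw [hausdorffEDist_comm]; exact hfin n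
  -- one-step almost invariance of closure (A n)
  have hstep : ∀ n, ∀ p ∈ closure (A n), infDist (f p) (A n) ≤ 1 / (n + 1) := by
    intro n
    have hclosed : IsClosed {y : X | infDist (f y) (A n) ≤ 1 / (n + 1)} :=
      isClosed_le ((continuous_infDist_pt (A n)).comp hf) continuous_const
    have hsub : A n ⊆ {y : X | infDist (f y) (A n) ≤ 1 / (n + 1)} := by
      rintro _ ⟨i, rfl⟩
      exact (infDist_le_dist_of_mem (s := A n) (y := x n (i+1)) ⟨i + 1, rfl⟩).trans (hx n i).le
    exact fun p hp => closure_minimal hsub hclosed hp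
  -- invariance of L
  have hinv : ∀ p ∈ (L : Set X), f p ∈ (L : Set X) := by
    intro p hp
    have hq : ∀ j : ℕ, ∃ q ∈ closure (A (φ j)), infDist p (closure (A (φ j))) = dist p q :=
      fun j => (hKc (φ j)).exists_infDist_eq_dist ((hAne (φ j)).closure) p
    choose q hqmem hqd using hq
    have hqp : Tendsto (fun j => dist p (q j)) atTop (𝓝 0) := by
      have hle : ∀ j, dist p (q j) ≤ dist (K (φ j)) L := by
        intro j
        rw [← hqd j]
        calc infDist p (closure (A (φ j)))
            ≤ hausdorffDist (L : Set X) (K (φ j) : Set X) :=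
              infDist_le_hausdorffDist_of_mem hp (hfin' (φ j))
          _ = dist (K (φ j)) L := by
              rw [NonemptyCompacts.dist_eq, hausdorffDist_comm]
      exact squeeze_zero (fun j => dist_nonneg) hle hdist
    have hfq : Tendsto (fun j => f (q j)) atTop (𝓝 (f p)) := by
      have : Tendsto q atTop (𝓝 p) := by
        rw [tendsto_iff_dist_tendsto_zero]
        simpa [dist_comm] using hqp
      exact (hf.tendsto p).comp this
    -- infDist (f p) L ≤ dist (f p) (f (q j)) + 1/(φ j + 1) + dist (K (φ j)) L
    have hbound : ∀ j, infDist (f p) (L : Set X) ≤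
        dist (f p) (f (q j)) + (1 / (φ j + 1) + dist (K (φ j)) L) := by
      intro j
      have h1 : infDist (f p) (L : Set X) ≤ infDist (f (q j)) (L : Set X) + dist (f p) (f (q j)) :=
        infDist_le_infDist_add_dist
      have h2 : infDist (f (q j)) (L : Set X) ≤
          infDist (f (q j)) (K (φ j) : Set X) + hausdorffDist (K (φ j) : Set X) (L : Set X) :=
        infDist_le_infDist_add_hausdorffDist (hfin (φ j))
      have h3 : infDist (f (q j)) (K (φ j) : Set X) ≤ 1 / (φ j + 1) := by
        have : infDist (f (q j)) (closure (A (φ j))) = infDist (f (q j)) (A (φ j)) :=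
          infDist_closure
        calc infDist (f (q j)) (K (φ j) : Set X)
            = infDist (f (q j)) (A (φ j)) := this
          _ ≤ 1 / (φ j + 1) := hstep (φ j) (q j) (hqmem j)
      have h4 : hausdorffDist (K (φ j) : Set X) (L : Set X) = dist (K (φ j)) L :=
        (NonemptyCompacts.dist_eq).symm
      linarith
    have htend : Tendsto (fun j => dist (f p) (f (q j)) + (1 / (φ j + 1) + dist (K (φ j)) L))
        atTop (𝓝 0) := by
      have t1 : Tendsto (fun j => dist (f p) (f (q j))) atTop (𝓝 0) := by
        have := tendsto_iff_dist_tendsto_zero.mp hfq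
        simpa [dist_comm] using this
      have t2 : Tendsto (fun j : ℕ => (1 : ℝ) / (φ j + 1)) atTop (𝓝 0) := by
        apply squeeze_zero (fun j => by positivity) (g := fun j : ℕ => (1 : ℝ) / (j + 1))
        · intro j
          apply div_le_div_of_nonneg_left one_pos.le (by positivity)
          have : (j : ℝ) ≤ (φ j : ℝ) := by exact_mod_cast (hφ.id_le j)
          linarith
        · exact tendsto_one_div_add_atTop_nhds_zero_nat
      simpa using t1.add (t2.add hdist)
    have hle0 : infDist (f p) (L : Set X) ≤ 0 :=
      ge_of_tendsto htend (Filter.Eventually.of_forall hbound)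
    have h0 : infDist (f p) (L : Set X) = 0 := le_antisymm hle0 infDist_nonneg
    exact (L.isCompact.isClosed.mem_iff_infDist_zero L.nonempty).mpr h0
  -- pick z in L; its orbit stays in L
  obtain ⟨z, hz⟩ := L.nonempty
  have horb : ∀ k, f^[k] z ∈ (L : Set X) := by
    intro k
    induction k with
    | zero => exact hz
    | succ k ih => rw [Function.iterate_succ_apply']; exact hinv _ ih
  -- pick j with Hausdorff distance < ε/2 and derive contradiction
  obtain ⟨j, hj⟩ := (hdist.eventually (gt_mem_nhds (half_pos hε))).exists
  obtain ⟨k, hk⟩ := hxz (φ j) z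
  have hlt : infDist (f^[k] z) (A (φ j)) < ε := by
    have h1 : infDist (f^[k] z) (K (φ j) : Set X) ≤
        hausdorffDist (L : Set X) (K (φ j) : Set X) :=
      infDist_le_hausdorffDist_of_mem (horb k) (hfin' (φ j))
    have h2 : hausdorffDist (L : Set X) (K (φ j) : Set X) = dist (K (φ j)) L := by
      rw [NonemptyCompacts.dist_eq, hausdorffDist_comm]
    have h3 : infDist (f^[k] z) (K (φ j) : Set X) = infDist (f^[k] z) (A (φ j)) :=
      infDist_closure
    rw [h3] at h1
    calc infDist (f^[k] z) (A (φ j)) ≤ dist (K (φ j)) L := by rw [← h2]; exact h1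
      _ < ε / 2 := hj
      _ < ε := by linarith
  obtain ⟨y, ⟨i, rfl⟩, hy⟩ := (infDist_lt_iff (hAne (φ j))).mp hlt
  exact absurd (hk i) (by rw [dist_comm] at hy; exact not_le.mpr hy)
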